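/- Let N ≥ 3 be an integer, let l_1, ..., l_N be positive real numbers, let G be a positive real number, and let d_1, ..., d_{N−2} be positive integers. Set a = −(N−1)! · G · Σ_{j=1}^N ∏_{k ≠ j} l_k, b = N! · G · ∏_{i=1}^N l_i, C = (N−2)! · G · Σ_{1 ≤ i < j ≤ N} ∏_{k ≠ i, j} l_k, s = Σ_{i=1}^{N−2} d_i, and Q = Σ_{1 ≤ i ≤ j ≤ N−2} d_i d_j. Then (2C − 2·a·s + b·s²) / (C − a·s + b·Q) = 2 − N(N−1)·(Σ_{i=1}^{N−2} d_i²) / ( Σ_{1 ≤ i < j ≤ N} 1/(l_i l_j) + (N−1)·( s · Σ_{i=1}^N 1/l_i + N·Q ) ). -/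
import Mathlib

lemma diag_sum' (n : ℕ) (f : Fin n → ℝ) :
    ∑ p ∈ Finset.univ.filter (fun p : Fin n × Fin n => p.1 = p.2), f p.1 * f p.2
      = ∑ i, f i ^ 2 := by
  refine Finset.sum_nbij' (fun p => p.1) (fun i => (i, i)) ?_ ?_ ?_ ?_ ?_ <;>
    simp +contextual [sq]

lemma swap_sum' (n : ℕ) (f : Fin n → ℝ) :
    ∑ p ∈ Finset.univ.filter (fun p : Fin n × Fin n => p.2 < p.1), f p.1 * f p.2
      = ∑ p ∈ Finset.univ.filter (fun p : Fin n × Fin n => p.1 < p.2), f p.1 * f p.2 := by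
  refine Finset.sum_equiv (Equiv.prodComm _ _) (by simp) ?_
  intro p _; simp [mul_comm]

lemma sum_sq_eq' (n : ℕ) (f : Fin n → ℝ) :
    (∑ i, f i) ^ 2 =
      2 * ∑ p ∈ Finset.univ.filter (fun p : Fin n × Fin n => p.1 < p.2), f p.1 * f p.2
        + ∑ i, f i ^ 2 := by
  have h0 : (∑ i, f i) ^ 2 = ∑ p : Fin n × Fin n, f p.1 * f p.2 := by
    rw [sq, Finset.sum_mul_sum, ← Finset.univ_product_univ, Finset.sum_product]
  rw [h0, ← Finset.sum_filter_add_sum_filter_not Finset.univ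
      (fun p : Fin n × Fin n => p.1 < p.2) (fun p => f p.1 * f p.2)]
  have h1 : Finset.univ.filter (fun p : Fin n × Fin n => ¬ p.1 < p.2)
      = Finset.univ.filter (fun p : Fin n × Fin n => p.2 < p.1)
        ∪ Finset.univ.filter (fun p : Fin n × Fin n => p.1 = p.2) := by
    ext p; simp [not_lt, le_iff_lt_or_eq, eq_comm, or_comm]
  have h2 : Disjoint (Finset.univ.filter (fun p : Fin n × Fin n => p.2 < p.1))
      (Finset.univ.filter (fun p : Fin n × Fin n => p.1 = p.2)) := by
    rw [Finset.disjoint_left]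
    intro p hp hq
    simp only [Finset.mem_filter] at hp hq
    exact absurd (hq.2 ▸ hp.2) (lt_irrefl _)
  rw [h1, Finset.sum_union h2, swap_sum', diag_sum']
  ring

lemma le_split' (n : ℕ) (f : Fin n → ℝ) :
    ∑ p ∈ Finset.univ.filter (fun p : Fin n × Fin n => p.1 ≤ p.2), f p.1 * f p.2
      = (∑ p ∈ Finset.univ.filter (fun p : Fin n × Fin n => p.1 < p.2), f p.1 * f p.2)
        + ∑ i, f i ^ 2 := by
  have h1 : Finset.univ.filter (fun p : Fin n × Fin n => p.1 ≤ p.2)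
      = Finset.univ.filter (fun p : Fin n × Fin n => p.1 < p.2)
        ∪ Finset.univ.filter (fun p : Fin n × Fin n => p.1 = p.2) := by
    ext p; simp [le_iff_lt_or_eq]
  have h2 : Disjoint (Finset.univ.filter (fun p : Fin n × Fin n => p.1 < p.2))
      (Finset.univ.filter (fun p : Fin n × Fin n => p.1 = p.2)) := by
    rw [Finset.disjoint_left]
    intro p hp hq
    simp only [Finset.mem_filter] at hp hq
    exact absurd (hq.2 ▸ hp.2) (lt_irrefl _)
  rw [h1, Finset.sum_union h2, diag_sum']

/-- Let `N ≥ 3`, let `l₁, …, l_N` be positive reals, `G > 0`, and `d₁, …, d_{N−2}`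
positive integers. With
`a = −(N−1)!·G·Σⱼ ∏_{k≠j} l_k`, `b = N!·G·∏ lᵢ`,
`C = (N−2)!·G·Σ_{i<j} ∏_{k≠i,j} l_k`, `s = Σ dᵢ`, `Q = Σ_{i≤j} dᵢ dⱼ`, one has
`(2C − 2as + bs²)/(C − as + bQ)
  = 2 − N(N−1)·(Σ dᵢ²) / (Σ_{i<j} 1/(lᵢlⱼ) + (N−1)(s·Σ 1/lᵢ + N·Q))`. -/
theorem stmt_15 (N : ℕ) (hN : 3 ≤ N) (l : Fin N → ℝ) (hl : ∀ i, 0 < l i)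
    (G : ℝ) (hG : 0 < G) (d : Fin (N - 2) → ℕ) (hd : ∀ i, 0 < d i)
    (a b C s Q : ℝ)
    (ha : a = -((Nat.factorial (N - 1) : ℝ) * G *
      ∑ j, ∏ k ∈ Finset.univ.erase j, l k))
    (hb : b = (Nat.factorial N : ℝ) * G * ∏ i, l i)
    (hC : C = (Nat.factorial (N - 2) : ℝ) * G *
      ∑ p ∈ Finset.univ.filter (fun p : Fin N × Fin N => p.1 < p.2),
        ∏ k ∈ (Finset.univ.erase p.1).erase p.2, l k)
    (hs : s = ∑ i, (d i : ℝ))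
    (hQ : Q = ∑ p ∈ Finset.univ.filter (fun p : Fin (N - 2) × Fin (N - 2) => p.1 ≤ p.2),
      (d p.1 : ℝ) * (d p.2 : ℝ)) :
    (2 * C - 2 * a * s + b * s ^ 2) / (C - a * s + b * Q) =
      2 - (N : ℝ) * ((N : ℝ) - 1) * (∑ i, (d i : ℝ) ^ 2) /
        ((∑ p ∈ Finset.univ.filter (fun p : Fin N × Fin N => p.1 < p.2),
            1 / (l p.1 * l p.2)) +
          ((N : ℝ) - 1) * (s * (∑ i, 1 / l i) + (N : ℝ) * Q)) := by
  set P : ℝ := ∏ i, l i with hP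
  set S1 : ℝ := ∑ i, 1 / l i with hS1
  set S2 : ℝ := ∑ p ∈ Finset.univ.filter (fun p : Fin N × Fin N => p.1 < p.2),
      1 / (l p.1 * l p.2) with hS2
  set T : ℝ := ∑ i, (d i : ℝ) ^ 2 with hT
  have hPpos : 0 < P := Finset.prod_pos fun i _ => hl i
  -- single-erase products
  have hone : ∀ j : Fin N, ∏ k ∈ Finset.univ.erase j, l k = P * (1 / l j) := by
    intro j
    have h := Finset.mul_prod_erase Finset.univ l (Finset.mem_univ j)
    rw [mul_one_div, eq_div_iff (hl j).ne']
    linear_combination h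
  -- double-erase products
  have htwo : ∀ p : Fin N × Fin N, p.1 < p.2 →
      ∏ k ∈ (Finset.univ.erase p.1).erase p.2, l k = P * (1 / (l p.1 * l p.2)) := by
    intro p hp
    have hmem : p.2 ∈ Finset.univ.erase p.1 :=
      Finset.mem_erase.mpr ⟨hp.ne', Finset.mem_univ _⟩
    have h := Finset.mul_prod_erase (Finset.univ.erase p.1) l hmem
    rw [hone p.1] at h
    rw [mul_one_div, eq_div_iff (mul_pos (hl p.1) (hl p.2)).ne']
    have h1 : (l p.1 : ℝ) ≠ 0 := (hl p.1).ne'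
    field_simp at h
    linear_combination h
  have hsum1 : ∑ j, ∏ k ∈ Finset.univ.erase j, l k = P * S1 := by
    rw [hS1, Finset.mul_sum]
    exact Finset.sum_congr rfl fun j _ => hone j
  have hsum2 : ∑ p ∈ Finset.univ.filter (fun p : Fin N × Fin N => p.1 < p.2),
      ∏ k ∈ (Finset.univ.erase p.1).erase p.2, l k = P * S2 := by
    rw [hS2, Finset.mul_sum]
    refine Finset.sum_congr rfl fun p hp => htwo p ?_
    simpa using hp
  -- factorial expansions
  set F : ℝ := (Nat.factorial (N - 2) : ℝ) with hF
  have hFpos : 0 < F := by positivity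
  have hcast : ((N - 2 : ℕ) : ℝ) = (N : ℝ) - 2 := by
    rw [Nat.cast_sub (by omega)]; norm_num
  have e1 : (Nat.factorial (N - 1) : ℝ) = ((N : ℝ) - 1) * F := by
    rw [show N - 1 = (N - 2) + 1 by omega, Nat.factorial_succ, Nat.cast_mul, hF]
    push_cast [hcast]; ring
  have e2 : (Nat.factorial N : ℝ) = (N : ℝ) * ((N : ℝ) - 1) * F := by
    conv_lhs => rw [show N = (N - 2) + 1 + 1 by omega]
    rw [Nat.factorial_succ, Nat.factorial_succ, hF]
    push_cast [hcast]; ring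
  have ha' : a = -(((N : ℝ) - 1) * F * G * (P * S1)) := by rw [ha, hsum1, e1]
  have hb' : b = (N : ℝ) * ((N : ℝ) - 1) * F * G * P := by rw [hb, e2]
  have hC' : C = F * G * (P * S2) := by rw [hC, hsum2]
  -- square identity
  have hs2 : s ^ 2 = 2 * Q - T := by
    have h1 := sum_sq_eq' (N - 2) (fun i => (d i : ℝ))
    have h2 := le_split' (N - 2) (fun i => (d i : ℝ))
    rw [← hs] at h1
    rw [← hQ] at h2
    rw [← hT] at h1 h2
    linarith
  -- positivity of the denominator
  have hspos : 0 < s := by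
    rw [hs]
    exact Finset.sum_pos (fun i _ => by exact_mod_cast hd i)
      ⟨⟨0, by omega⟩, Finset.mem_univ _⟩
  have hS1pos : 0 < S1 := by
    rw [hS1]
    exact Finset.sum_pos (fun i _ => one_div_pos.mpr (hl i)) ⟨⟨0, by omega⟩, Finset.mem_univ _⟩
  have hS2nn : 0 ≤ S2 := by
    rw [hS2]
    exact Finset.sum_nonneg fun p _ =>
      le_of_lt (one_div_pos.mpr (mul_pos (hl p.1) (hl p.2)))
  have hQpos : 0 < Q := by
    rw [hQ]
    refine Finset.sum_pos (fun p hp => ?_) ?_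
    · exact mul_pos (by exact_mod_cast hd p.1) (by exact_mod_cast hd p.2)
    · exact ⟨(⟨0, by omega⟩, ⟨0, by omega⟩), by simp⟩
  have hN3 : (3 : ℝ) ≤ (N : ℝ) := by exact_mod_cast hN
  have hD : 0 < S2 + ((N : ℝ) - 1) * (s * S1 + (N : ℝ) * Q) := by
    have h1 : 0 < s * S1 := mul_pos hspos hS1pos
    have h2 : 0 < (N : ℝ) * Q := mul_pos (by linarith) hQpos
    have h3 : 0 < ((N : ℝ) - 1) * (s * S1 + (N : ℝ) * Q) :=
      mul_pos (by linarith) (by linarith)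
    linarith
  have hK : (0 : ℝ) < F * G * P := by positivity
  have hden : C - a * s + b * Q =
      (F * G * P) * (S2 + ((N : ℝ) - 1) * (s * S1 + (N : ℝ) * Q)) := by
    rw [ha', hb', hC']; ring
  have hnum : 2 * C - 2 * a * s + b * s ^ 2 =
      (F * G * P) * (2 * (S2 + ((N : ℝ) - 1) * (s * S1 + (N : ℝ) * Q))
        - (N : ℝ) * ((N : ℝ) - 1) * T) := by
    rw [ha', hb', hC', hs2]; ring
  rw [hnum, hden, mul_div_mul_left _ _ hK.ne']
  field_simp
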